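/- Let λ : H → ℝ^{E(Γ)} be defined on H = {(x₁,…,xₙ) ∈ (ℝ³)ⁿ : Σxᵢ = 0} by λ_a(x) = |Σ_{i∈I(a)} xᵢ| for internal edges a and λ_a(x) = |x_a| for half-edges a, where Γ is an admissible graph with n half-edges. Then the image of λ is exactly the convex polyhedron Δ(Γ) of tuples (d_a) of nonnegative reals satisfying the triangle inequalities |d_a − d_b| ≤ d_c ≤ d_a + d_b at every vertex of Γ (for the three edges a,b,c incident to that vertex). -/

import Mathlib

/-- The set of vertices that can be joined to `v` by a walk avoiding `w`:
for a directed edge `(v, w)` of a tree, this is the side of the edge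
containing `v`. -/
def sideSet {V : Type*} (G : SimpleGraph V) (v w : V) : Set V :=
  {x | ∃ p : G.Walk x v, w ∉ p.support}



lemma norm_eq_of_sq_eq {a b : ℝ} (ha : 0 ≤ a) (hb : 0 ≤ b) (h : a ^ 2 = b ^ 2) : a = b := by
  rw [← Real.sqrt_sq ha, ← Real.sqrt_sq hb, h]

lemma key_split (u : EuclideanSpace ℝ (Fin 3)) {s t : ℝ} (hs : 0 ≤ s) (ht : 0 ≤ t)
    (h1 : ‖u‖ ≤ s + t) (h2 : s ≤ ‖u‖ + t) (h3 : t ≤ ‖u‖ + s) :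
    ∃ p : EuclideanSpace ℝ (Fin 3), ‖p‖ = s ∧ ‖u - p‖ = t := by
  by_cases hu : u = 0
  · subst hu
    simp only [norm_zero] at h1 h2 h3
    have hst : s = t := le_antisymm (by linarith) (by linarith)
    refine ⟨s • EuclideanSpace.single (0 : Fin 3) (1:ℝ), ?_, ?_⟩
    · rw [norm_smul, EuclideanSpace.norm_single, norm_one, mul_one, Real.norm_eq_abs,
        abs_of_nonneg hs]
    · rw [zero_sub, norm_neg, norm_smul, EuclideanSpace.norm_single, norm_one, mul_one,
        Real.norm_eq_abs, abs_of_nonneg hs, hst]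
  · set r := ‖u‖ with hr
    have hr0 : 0 < r := norm_pos_iff.mpr hu
    obtain ⟨e, he1, he2⟩ : ∃ e : EuclideanSpace ℝ (Fin 3), ‖e‖ = 1 ∧ inner ℝ u e = (0:ℝ) := by
      have hne : (ℝ ∙ u)ᗮ ≠ ⊥ := by
        intro hb
        have htop := (Submodule.orthogonal_eq_bot_iff).mp hb
        have h1' : Module.finrank ℝ (ℝ ∙ u) = 1 := finrank_span_singleton hu
        have h3' : Module.finrank ℝ (EuclideanSpace ℝ (Fin 3)) = 3 := finrank_euclideanSpace_fin
        rw [htop, finrank_top] at h1'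
        rw [h1'] at h3'
        omega
      obtain ⟨w, hw, hw0⟩ := (Submodule.ne_bot_iff _).mp hne
      refine ⟨(‖w‖:ℝ)⁻¹ • w, norm_smul_inv_norm hw0, ?_⟩
      rw [real_inner_smul_right]
      have h0 : inner ℝ u w = (0:ℝ) :=
        (Submodule.mem_orthogonal _ w).mp hw u (Submodule.mem_span_singleton_self u)
      rw [h0, mul_zero]
    set α := (r^2 + s^2 - t^2) / (2*r) with hα
    have hprod : 0 ≤ (r+s-t)*((r+s+t)*((t-r+s)*(t+r-s))) := by
      apply mul_nonneg (by linarith)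
      apply mul_nonneg (by linarith)
      exact mul_nonneg (by linarith) (by linarith)
    have hβ2 : 0 ≤ s^2 - α^2 := by
      rw [hα, div_pow, sub_nonneg, div_le_iff₀ (by positivity)]
      nlinarith [hprod]
    set β := Real.sqrt (s^2 - α^2) with hβ
    have hβsq : β^2 = s^2 - α^2 := Real.sq_sqrt hβ2
    have h2α : 2 * α * r = r^2 + s^2 - t^2 := by
      rw [hα]; field_simp
    refine ⟨(α / r) • u + β • e, ?_, ?_⟩
    · apply norm_eq_of_sq_eq (norm_nonneg _) hs
      rw [norm_add_sq_real, real_inner_smul_left, real_inner_smul_right, he2,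
        norm_smul, norm_smul, ← hr]
      simp only [Real.norm_eq_abs, he1, mul_one, mul_zero]
      rw [mul_pow, sq_abs]
      have hq : (α / r)^2 * r^2 = α^2 := by field_simp
      rw [hq, sq_abs β, hβsq]; ring
    · apply norm_eq_of_sq_eq (norm_nonneg _) ht
      have huv : u - ((α / r) • u + β • e) = (1 - α / r) • u - β • e := by module
      rw [huv, norm_sub_sq_real, real_inner_smul_left, real_inner_smul_right, he2,
        norm_smul, norm_smul, ← hr]
      simp only [Real.norm_eq_abs, he1, mul_one, mul_zero]
      rw [mul_pow, sq_abs, sq_abs β, hβsq]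
      have hh : (1 - α/r)^2 * r^2 = (r - α)^2 := by field_simp
      rw [hh]
      nlinarith [h2α]

section SideAux
open SimpleGraph
variable {V : Type*} {G : SimpleGraph V}

lemma mem_side_self {v w : V} (h : v ≠ w) : v ∈ sideSet G v w :=
  ⟨SimpleGraph.Walk.nil, by simp [Ne.symm h]⟩

lemma side_cons {x y v w : V} (h : G.Adj x y) (hy : y ∈ sideSet G v w) (hxw : x ≠ w) :
    x ∈ sideSet G v w := by
  obtain ⟨p, hp⟩ := hy
  exact ⟨SimpleGraph.Walk.cons h p, by
    simp only [SimpleGraph.Walk.support_cons, List.mem_cons]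
    rintro (rfl | hw) <;> [exact hxw rfl; exact hp hw]⟩

lemma adj_mem_side {x v w : V} (h : G.Adj x v) (hxw : x ≠ w) (hvw : v ≠ w) :
    x ∈ sideSet G v w :=
  side_cons h (mem_side_self hvw) hxw

lemma side_mono {p q v w : V} (hw : w ∉ sideSet G p q) (hp : p ∈ sideSet G v w) :
    sideSet G p q ⊆ sideSet G v w := by
  rintro x ⟨W1, hW1⟩
  obtain ⟨W2, hW2⟩ := hp
  have hwW1 : w ∉ W1.support := by
    intro hmem
    classical
    exact hw ⟨W1.dropUntil w hmem,
      fun hq => hW1 (SimpleGraph.Walk.support_dropUntil_subset W1 hmem hq)⟩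
  exact ⟨W1.append W2, by
    rw [SimpleGraph.Walk.mem_support_append_iff]
    rintro (h | h) <;> [exact hwW1 h; exact hW2 h]⟩

lemma side_disjoint (hac : G.IsAcyclic) {v w : V} (h : G.Adj v w) {x : V}
    (h1 : x ∈ sideSet G v w) (h2 : x ∈ sideSet G w v) : False := by
  classical
  obtain ⟨W1, hW1⟩ := h1
  obtain ⟨W2, hW2⟩ := h2
  set P := W1.toPath with hP
  set Q := W2.toPath with hQ
  have hwP : w ∉ (P : G.Walk x v).support := fun hm => hW1 (W1.support_toPath_subset hm)
  have hvQ : v ∉ (Q : G.Walk x w).support := fun hm => hW2 (W2.support_toPath_subset hm)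
  let q2 : G.Walk v x := SimpleGraph.Walk.cons h (Q : G.Walk x w).reverse
  have hq2 : q2.IsPath := by
    apply SimpleGraph.Walk.IsPath.cons
    · exact (Q.2).reverse
    · rw [SimpleGraph.Walk.support_reverse]; simpa using hvQ
  have huniq := SimpleGraph.isAcyclic_iff_path_unique.mp hac
    ((P : G.Walk x v).reverse.toPath) ⟨q2, hq2⟩
  have hwmem : w ∈ ((P : G.Walk x v).reverse.toPath : G.Walk v x).support := by
    rw [huniq]
    simp [q2]
  have := (P : G.Walk x v).reverse.support_toPath_subset hwmem
  rw [SimpleGraph.Walk.support_reverse, List.mem_reverse] at this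
  exact hwP this

lemma side_cover (hc : G.Preconnected) {v w : V} (h : G.Adj v w) (x : V) :
    x ∈ sideSet G v w ∨ x ∈ sideSet G w v := by
  obtain ⟨W⟩ := hc x v
  induction W with
  | nil => exact Or.inl (mem_side_self h.ne)
  | @cons a b c hab W ih =>
    rcases ih h with hy | hy
    · by_cases haw : a = w
      · subst haw; exact Or.inr (mem_side_self h.ne')
      · exact Or.inl (side_cons hab hy haw)
    · by_cases hav : a = c
      · subst hav; exact Or.inl (mem_side_self h.ne)
      · exact Or.inr (side_cons hab hy hav)

lemma side_cases {v w x : V} (hx : x ∈ sideSet G v w) :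
    x = v ∨ ∃ y, G.Adj y v ∧ y ≠ w ∧ x ∈ sideSet G y v := by
  obtain ⟨W, hW⟩ := hx
  induction W with
  | nil => exact Or.inl rfl
  | @cons a b c hab W ih =>
    rw [SimpleGraph.Walk.support_cons, List.mem_cons] at hW
    push_neg at hW
    obtain ⟨hwa, hwW⟩ := hW
    by_cases hav : a = c
    · exact Or.inl hav
    · rcases ih hwW with rfl | ⟨y, hyv, hyw, hy⟩
      · exact Or.inr ⟨a, hab, Ne.symm hwa, mem_side_self hav⟩
      · exact Or.inr ⟨y, hyv, hyw, side_cons hab hy hav⟩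

lemma side_subside (hac : G.IsAcyclic) {v w a : V} (hvw : G.Adj v w) (hav : G.Adj a v)
    (haw : a ≠ w) : sideSet G a v ⊆ sideSet G v w := by
  have hwmem : w ∈ sideSet G v a := adj_mem_side hvw.symm (Ne.symm haw) hav.ne'
  have hwna : w ∉ sideSet G a v := fun h => side_disjoint hac hav h hwmem
  exact side_mono hwna (adj_mem_side hav haw hvw.ne)

lemma sides_disjoint2 (hac : G.IsAcyclic) {a b v : V} (hav : G.Adj a v) (hbv : G.Adj b v)
    (hab : a ≠ b) {x : V} (h1 : x ∈ sideSet G a v) (h2 : x ∈ sideSet G b v) : False := by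
  have hbmem : b ∈ sideSet G v a := adj_mem_side hbv (Ne.symm hab) hav.ne'
  have hbna : b ∉ sideSet G a v := fun h => side_disjoint hac hav h hbmem
  have hamem : a ∈ sideSet G v b := adj_mem_side hav hab hbv.ne'
  have hsub : sideSet G a v ⊆ sideSet G v b := side_mono hbna hamem
  exact side_disjoint hac hbv.symm (hsub h1) h2

lemma side_crossing (hac : G.IsAcyclic) {v w r s : V} (hvw : G.Adj v w) (hrs : G.Adj r s)
    (hv : v ∈ sideSet G r s) (hw : w ∈ sideSet G s r) : v = r ∧ w = s := by
  have hws : w = s := by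
    by_contra hws
    exact side_disjoint hac hrs (side_cons hvw.symm hv hws) hw
  subst hws
  refine ⟨?_, rfl⟩
  by_contra hvr
  exact side_disjoint hac hrs hv (adj_mem_side hvw hvr hrs.ne')

end SideAux


section TreeAux
open SimpleGraph
variable {V : Type*} [Fintype V] [DecidableEq V] {G : SimpleGraph V} [DecidableRel G.Adj]

lemma L_split_edge (hpre : G.Preconnected) {v w : V} (hvw : G.Adj v w) :
    {y : V | G.degree y = 1} =
      ({y : V | G.degree y = 1} ∩ sideSet G v w) ∪ ({y : V | G.degree y = 1} ∩ sideSet G w v) := by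
  ext z
  simp only [Set.mem_union, Set.mem_inter_iff, Set.mem_setOf_eq]
  constructor
  · intro hz
    rcases side_cover hpre hvw z with h | h
    exacts [Or.inl ⟨hz, h⟩, Or.inr ⟨hz, h⟩]
  · rintro (⟨h, _⟩ | ⟨h, _⟩) <;> exact h

lemma sum_flip (hac : G.IsAcyclic) (hpre : G.Preconnected) {v w : V} (hvw : G.Adj v w)
    (x : V → EuclideanSpace ℝ (Fin 3))
    (hx0 : (∑ᶠ i ∈ {y : V | G.degree y = 1}, x i) = 0) :
    (∑ᶠ i ∈ {y : V | G.degree y = 1} ∩ sideSet G v w, x i)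
      = -(∑ᶠ i ∈ {y : V | G.degree y = 1} ∩ sideSet G w v, x i) := by
  have hdisj : Disjoint ({y : V | G.degree y = 1} ∩ sideSet G v w)
      ({y : V | G.degree y = 1} ∩ sideSet G w v) :=
    Set.disjoint_left.mpr fun z hz1 hz2 => (side_disjoint hac hvw hz1.2 hz2.2).elim
  rw [L_split_edge hpre hvw, finsum_mem_union hdisj (Set.toFinite _) (Set.toFinite _)] at hx0
  exact eq_neg_of_add_eq_zero_left hx0

lemma neighbors_three {v w : V} (h3 : G.degree v = 3) (hw : G.Adj v w) :
    ∃ a b : V, a ≠ b ∧ w ≠ a ∧ w ≠ b ∧ G.neighborFinset v = {w, a, b} ∧ G.Adj v a ∧ G.Adj v b := by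
  have hcard : (G.neighborFinset v).card = 3 := h3
  obtain ⟨p, q, r, hpq, hpr, hqr, hset⟩ := Finset.card_eq_three.mp hcard
  have hwmem : w ∈ ({p, q, r} : Finset V) := by
    rw [← hset]; exact (G.mem_neighborFinset v w).mpr hw
  simp only [Finset.mem_insert, Finset.mem_singleton] at hwmem
  have hadj : ∀ z ∈ ({p, q, r} : Finset V), G.Adj v z := by
    intro z hz; rw [← hset] at hz; exact (G.mem_neighborFinset v z).mp hz
  rcases hwmem with rfl | rfl | rfl
  · exact ⟨q, r, hqr, hpq, hpr, hset, hadj q (by simp), hadj r (by simp)⟩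
  · refine ⟨p, r, hpr, Ne.symm hpq, hqr, ?_, hadj p (by simp), hadj r (by simp)⟩
    rw [hset]; ext z; simp; tauto
  · refine ⟨p, q, hpq, Ne.symm hpr, Ne.symm hqr, ?_, hadj p (by simp), hadj q (by simp)⟩
    rw [hset]; ext z; simp; tauto

lemma L_inter_split (hac : G.IsAcyclic) {v w a b : V} (hvw : G.Adj v w) (hva : G.Adj v a)
    (hvb : G.Adj v b) (hwa : w ≠ a) (hwb : w ≠ b)
    (hnb : G.neighborFinset v = {w, a, b}) (hv1 : ¬ G.degree v = 1) :
    {y : V | G.degree y = 1} ∩ sideSet G v w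
      = ({y : V | G.degree y = 1} ∩ sideSet G a v) ∪ ({y : V | G.degree y = 1} ∩ sideSet G b v) := by
  ext z
  simp only [Set.mem_union, Set.mem_inter_iff, Set.mem_setOf_eq]
  constructor
  · rintro ⟨hzL, hz⟩
    rcases side_cases hz with rfl | ⟨y, hyv, hyw, hzy⟩
    · exact absurd hzL hv1
    · have hy : y ∈ G.neighborFinset v := (G.mem_neighborFinset v y).mpr hyv.symm
      rw [hnb] at hy
      simp only [Finset.mem_insert, Finset.mem_singleton] at hy
      rcases hy with rfl | rfl | rfl
      · exact absurd rfl hyw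
      · exact Or.inl ⟨hzL, hzy⟩
      · exact Or.inr ⟨hzL, hzy⟩
  · rintro (⟨hzL, hz⟩ | ⟨hzL, hz⟩)
    · exact ⟨hzL, side_subside hac hvw hva.symm (Ne.symm hwa) hz⟩
    · exact ⟨hzL, side_subside hac hvw hvb.symm (Ne.symm hwb) hz⟩

lemma build (hG : G.IsTree) (hdeg : ∀ x : V, G.degree x = 1 ∨ G.degree x = 3)
    (d : V → V → ℝ) (hsymm : ∀ v w, d v w = d w v)
    (hd0 : ∀ v w, G.Adj v w → 0 ≤ d v w)
    (htri : ∀ t a b c : V, G.Adj t a → G.Adj t b → G.Adj t c →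
      a ≠ b → b ≠ c → a ≠ c → d t c ≤ d t a + d t b) :
    ∀ n : ℕ, ∀ v w : V, G.Adj v w → (sideSet G v w).ncard ≤ n →
      ∀ u : EuclideanSpace ℝ (Fin 3), ‖u‖ = d v w →
      ∃ x : V → EuclideanSpace ℝ (Fin 3),
        (∑ᶠ i ∈ ({y : V | G.degree y = 1} ∩ sideSet G v w), x i) = u ∧
        ∀ p q : V, G.Adj p q → sideSet G p q ⊆ sideSet G v w →
          d p q = ‖∑ᶠ i ∈ ({y : V | G.degree y = 1} ∩ sideSet G p q), x i‖ := by
  have hac := hG.IsAcyclic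
  intro n
  induction n with
  | zero =>
    intro v w hvw hn u hu
    exfalso
    have hv : v ∈ sideSet G v w := mem_side_self hvw.ne
    have : 0 < (sideSet G v w).ncard := (Set.ncard_pos (Set.toFinite _)).mpr ⟨v, hv⟩
    omega
  | succ n ih =>
    intro v w hvw hn u hu
    rcases hdeg v with h1 | h3
    · -- leaf case
      obtain ⟨c, hc⟩ := Finset.card_eq_one.mp (h1 : (G.neighborFinset v).card = 1)
      have hcw : w = c := by
        have : w ∈ G.neighborFinset v := (G.mem_neighborFinset v w).mpr hvw
        rw [hc] at this; simpa using this
      rw [← hcw] at hc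
      have hside : sideSet G v w = {v} := by
        ext z
        constructor
        · intro hz
          rcases side_cases hz with rfl | ⟨y, hyv, hyw, _⟩
          · rfl
          · have : y ∈ G.neighborFinset v := (G.mem_neighborFinset v y).mpr hyv.symm
            rw [hc] at this
            exact absurd (by simpa using this) hyw
        · rintro rfl; exact mem_side_self hvw.ne
      have hLv : {y : V | G.degree y = 1} ∩ sideSet G v w = {v} := by
        rw [hside]
        ext z
        simp only [Set.mem_inter_iff, Set.mem_setOf_eq, Set.mem_singleton_iff]
        constructor
        · rintro ⟨_, rfl⟩; rfl
        · rintro rfl; exact ⟨h1, rfl⟩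
      refine ⟨fun _ => u, ?_, ?_⟩
      · rw [hLv, finsum_mem_singleton]
      · intro p q hpq hsub
        have hp : p ∈ sideSet G p q := mem_side_self hpq.ne
        have hpv : p = v := by
          have := hsub hp; rw [hside] at this; exact this
        subst hpv
        have hq : q = w := by
          have : q ∈ G.neighborFinset p := (G.mem_neighborFinset p q).mpr hpq
          rw [hc] at this; simpa using this
        subst hq
        rw [hLv, finsum_mem_singleton]
        exact hu.symm
    · -- trivalent case
      obtain ⟨a, b, hab, hwa, hwb, hnb, hva, hvb⟩ := neighbors_three h3 hvw
      have t1 : d v a ≤ d v w + d v b := htri v w b a hvw hvb hva hwb (Ne.symm hab) hwa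
      have t2 : d v b ≤ d v w + d v a := htri v w a b hvw hva hvb hwa hab hwb
      have t3 : d v w ≤ d v a + d v b := htri v a b w hva hvb hvw hab (Ne.symm hwb) (Ne.symm hwa)
      obtain ⟨p, hp1, hp2⟩ := key_split u (hd0 v a hva) (hd0 v b hvb)
        (by rw [hu]; exact t3) (by rw [hu]; exact t1) (by rw [hu]; exact t2)
      have hav : G.Adj a v := hva.symm
      have hbv : G.Adj b v := hvb.symm
      have hsub_a : sideSet G a v ⊆ sideSet G v w := side_subside hac hvw hav (Ne.symm hwa)
      have hsub_b : sideSet G b v ⊆ sideSet G v w := side_subside hac hvw hbv (Ne.symm hwb)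
      have hvnot_a : v ∉ sideSet G a v := fun h => side_disjoint hac hav h (mem_side_self hav.ne')
      have hvnot_b : v ∉ sideSet G b v := fun h => side_disjoint hac hbv h (mem_side_self hbv.ne')
      have hvmem : v ∈ sideSet G v w := mem_side_self hvw.ne
      have hcard : ∀ y : V, sideSet G y v ⊆ sideSet G v w → v ∉ sideSet G y v →
          (sideSet G y v).ncard ≤ n := by
        intro y hs hv'
        have h1' : sideSet G y v ⊆ sideSet G v w \ {v} := fun z hz =>
          ⟨hs hz, by rintro rfl; exact hv' hz⟩
        have h2' : (sideSet G v w \ {v}).ncard = (sideSet G v w).ncard - 1 :=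
          Set.ncard_diff_singleton_of_mem hvmem
        have h3' := Set.ncard_le_ncard h1' (Set.toFinite _)
        omega
      obtain ⟨xA, hA0, hAe⟩ := ih a v hav (hcard a hsub_a hvnot_a) p
        (by rw [hp1, hsymm])
      obtain ⟨xB, hB0, hBe⟩ := ih b v hbv (hcard b hsub_b hvnot_b) (u - p)
        (by rw [hp2, hsymm])
      classical
      set x : V → EuclideanSpace ℝ (Fin 3) :=
        fun i => if i ∈ sideSet G a v then xA i else xB i with hxdef
      have hLpart := L_inter_split hac hvw hva hvb hwa hwb hnb (by omega)
      have hdisjL : Disjoint ({y : V | G.degree y = 1} ∩ sideSet G a v)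
          ({y : V | G.degree y = 1} ∩ sideSet G b v) :=
        Set.disjoint_left.mpr fun z hz1 hz2 =>
          (sides_disjoint2 hac hav hbv hab hz1.2 hz2.2).elim
      have hxA : ∀ z ∈ {y : V | G.degree y = 1} ∩ sideSet G a v, x z = xA z :=
        fun z hz => if_pos hz.2
      have hxB : ∀ z ∈ {y : V | G.degree y = 1} ∩ sideSet G b v, x z = xB z :=
        fun z hz => if_neg fun h => sides_disjoint2 hac hav hbv hab h hz.2
      have hsum : (∑ᶠ i ∈ ({y : V | G.degree y = 1} ∩ sideSet G v w), x i) = u := by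
        rw [hLpart, finsum_mem_union hdisjL (Set.toFinite _) (Set.toFinite _),
          finsum_mem_congr rfl hxA, finsum_mem_congr rfl hxB, hA0, hB0]
        abel
      refine ⟨x, hsum, ?_⟩
      intro p' q' hpq hsubpq
      have hp'mem : p' ∈ sideSet G p' q' := mem_side_self hpq.ne
      have hp'vw : p' ∈ sideSet G v w := hsubpq hp'mem
      have hcase : p' = v ∨ p' ∈ sideSet G a v ∨ p' ∈ sideSet G b v := by
        rcases side_cases hp'vw with rfl | ⟨y, hyv, hyw, hy⟩
        · exact Or.inl rfl
        · have : y ∈ G.neighborFinset v := (G.mem_neighborFinset v y).mpr hyv.symm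
          rw [hnb] at this
          simp only [Finset.mem_insert, Finset.mem_singleton] at this
          rcases this with rfl | rfl | rfl
          · exact absurd rfl hyw
          · exact Or.inr (Or.inl hy)
          · exact Or.inr (Or.inr hy)
      -- helper for the two symmetric subtree cases
      have hsubtree : ∀ (c : V), G.Adj c v → p' ∈ sideSet G c v → q' ≠ v →
          sideSet G p' q' ⊆ sideSet G c v := by
        intro c hcv hp'c hq'v
        have hvnotpq : v ∉ sideSet G p' q' := by
          intro hv'
          have hq'w : w ≠ q' := by
            intro h
            have hpq' : G.Adj p' w := by rw [h]; exact hpq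
            have hp'ne : p' ≠ v := fun hh =>
              side_disjoint hac hcv (hh ▸ hp'c) (mem_side_self hcv.ne')
            have hmm : p' ∈ sideSet G w v := adj_mem_side hpq' hp'ne hvw.ne'
            exact side_disjoint hac hvw hp'vw hmm
          have hw' : w ∈ sideSet G p' q' := side_cons hvw.symm hv' hq'w
          exact side_disjoint hac hvw (hsubpq hw') (mem_side_self hvw.ne')
        exact side_mono hvnotpq hp'c
      rcases hcase with hp'v | hp'a | hp'b
      · subst hp'v
        have hq'mem : q' ∈ G.neighborFinset p' := (G.mem_neighborFinset p' q').mpr hpq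
        rw [hnb] at hq'mem
        simp only [Finset.mem_insert, Finset.mem_singleton] at hq'mem
        rcases hq'mem with hq | hq | hq
        · subst hq
          rw [hsum]; exact hu.symm
        · exfalso
          rw [hq] at hsubpq
          have hwmem : w ∈ sideSet G p' a := adj_mem_side hvw.symm hwa hva.ne
          exact side_disjoint hac hvw (hsubpq hwmem) (mem_side_self hvw.ne')
        · exfalso
          rw [hq] at hsubpq
          have hwmem : w ∈ sideSet G p' b := adj_mem_side hvw.symm hwb hvb.ne
          exact side_disjoint hac hvw (hsubpq hwmem) (mem_side_self hvw.ne')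
      · by_cases hq'v : q' = v
        · subst hq'v
          have hmem : p' ∈ G.neighborFinset q' := (G.mem_neighborFinset q' p').mpr hpq.symm
          rw [hnb] at hmem
          simp only [Finset.mem_insert, Finset.mem_singleton] at hmem
          have hp'a' : p' = a := by
            rcases hmem with h | h | h
            · exfalso
              rw [h] at hp'a
              exact side_disjoint hac hav hp'a (adj_mem_side hvw.symm hwa hva.ne)
            · exact h
            · exfalso
              rw [h] at hp'a
              exact sides_disjoint2 hac hav hbv hab hp'a (mem_side_self hbv.ne)
          subst hp'a'
          rw [finsum_mem_congr rfl hxA]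
          exact hAe p' q' hpq subset_rfl
        · have hsub' := hsubtree a hav hp'a hq'v
          rw [finsum_mem_congr rfl fun z hz => hxA z ⟨hz.1, hsub' hz.2⟩]
          exact hAe p' q' hpq hsub'
      · by_cases hq'v : q' = v
        · subst hq'v
          have hmem : p' ∈ G.neighborFinset q' := (G.mem_neighborFinset q' p').mpr hpq.symm
          rw [hnb] at hmem
          simp only [Finset.mem_insert, Finset.mem_singleton] at hmem
          have hp'b' : p' = b := by
            rcases hmem with h | h | h
            · exfalso
              rw [h] at hp'b
              exact side_disjoint hac hbv hp'b (adj_mem_side hvw.symm hwb hvb.ne)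
            · exfalso
              rw [h] at hp'b
              exact sides_disjoint2 hac hbv hav (Ne.symm hab) hp'b (mem_side_self hav.ne)
            · exact h
          subst hp'b'
          rw [finsum_mem_congr rfl hxB]
          exact hBe p' q' hpq subset_rfl
        · have hsub' := hsubtree b hbv hp'b hq'v
          rw [finsum_mem_congr rfl fun z hz => hxB z ⟨hz.1, hsub' hz.2⟩]
          exact hBe p' q' hpq hsub'

end TreeAux

/-- An admissible graph `Γ` is modeled as a finite tree `G` whose leaves are
the half-edges and whose internal vertices are trivalent.  A tuple of vectors
`x` in `ℝ³` indexed by the half-edges with `∑ xᵢ = 0` gives, for each directed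
edge `(v, w)`, the value `λ_{(v,w)}(x) = ‖∑_{i ∈ I(v,w)} xᵢ‖` where `I(v, w)`
is the set of half-edges on the `v`-side of the edge (for the edge at a leaf
`i` this is just `‖xᵢ‖`).  A symmetric function `d` on the edges is in the
image of `λ` if and only if it is nonnegative and satisfies the triangle
inequalities at each vertex, i.e. `d ∈ Δ(Γ)`. -/
theorem image_of_lambda_eq_polyhedron {V : Type*} [Fintype V] [DecidableEq V]
    (G : SimpleGraph V) [DecidableRel G.Adj] (hG : G.IsTree)
    (hdeg : ∀ x : V, G.degree x = 1 ∨ G.degree x = 3)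
    (d : V → V → ℝ) (hsymm : ∀ v w, d v w = d w v) :
    (∃ x : V → EuclideanSpace ℝ (Fin 3),
        (∑ᶠ i ∈ {y : V | G.degree y = 1}, x i) = 0 ∧
        ∀ v w : V, G.Adj v w →
          d v w = ‖∑ᶠ i ∈ ({y : V | G.degree y = 1} ∩ sideSet G v w), x i‖)
      ↔ ((∀ v w : V, G.Adj v w → 0 ≤ d v w) ∧
          ∀ t a b c : V, G.Adj t a → G.Adj t b → G.Adj t c →
            a ≠ b → b ≠ c → a ≠ c → d t c ≤ d t a + d t b) := by

  classical
  have hac := hG.IsAcyclic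
  have hpre := hG.isConnected.preconnected
  constructor
  · rintro ⟨x, hx0, hxd⟩
    constructor
    · intro v w hvw
      rw [hxd v w hvw]
      exact norm_nonneg _
    · intro t a b c hta htb htc hab hbc hac'
      have hsub : ({a, b, c} : Finset V) ⊆ G.neighborFinset t := by
        intro z hz
        simp only [Finset.mem_insert, Finset.mem_singleton] at hz
        rcases hz with rfl | rfl | rfl <;>
          simpa [SimpleGraph.mem_neighborFinset] using ‹_›
      have hc3 : ({a, b, c} : Finset V).card = 3 := by
        rw [Finset.card_insert_of_notMem (by simp [hab, hac']),
          Finset.card_insert_of_notMem (by simp [hbc]), Finset.card_singleton]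
      have hge : 3 ≤ G.degree t := by
        have := Finset.card_le_card hsub
        rwa [hc3] at this
      have h3 : G.degree t = 3 := by rcases hdeg t with h | h <;> omega
      have hnb : G.neighborFinset t = {c, a, b} := by
        have heq : ({a, b, c} : Finset V) = G.neighborFinset t :=
          Finset.eq_of_subset_of_card_le hsub (by rw [hc3]; exact le_of_eq h3)
        rw [← heq]; ext z; simp; tauto
      have hsplit := L_inter_split hac htc hta htb (Ne.symm hac') (Ne.symm hbc) hnb
        (by simp [h3])
      have e1 := sum_flip hac hpre hta.symm x hx0
      have e2 := sum_flip hac hpre htb.symm x hx0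
      have hdisjL : Disjoint ({y : V | G.degree y = 1} ∩ sideSet G a t)
          ({y : V | G.degree y = 1} ∩ sideSet G b t) :=
        Set.disjoint_left.mpr fun z h1 h2 =>
          (sides_disjoint2 hac hta.symm htb.symm hab h1.2 h2.2).elim
      rw [hxd t c htc, hsplit, finsum_mem_union hdisjL (Set.toFinite _) (Set.toFinite _),
        e1, e2, hxd t a hta, hxd t b htb]
      refine le_trans (norm_add_le _ _) ?_
      rw [norm_neg, norm_neg]
  · rintro ⟨hd0, htri⟩
    by_cases hne : Nonempty V
    · obtain ⟨v₀⟩ := hne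
      have hpos : 0 < G.degree v₀ := by rcases hdeg v₀ with h | h <;> omega
      obtain ⟨s₀, hrs⟩ := (G.degree_pos_iff_exists_adj v₀).mp hpos
      set u₀ : EuclideanSpace ℝ (Fin 3) := d v₀ s₀ • EuclideanSpace.single (0 : Fin 3) (1 : ℝ)
        with hu₀
      have hnorm : ‖u₀‖ = d v₀ s₀ := by
        rw [hu₀, norm_smul, EuclideanSpace.norm_single, norm_one, mul_one, Real.norm_eq_abs,
          abs_of_nonneg (hd0 _ _ hrs)]
      have hcardle : ∀ p q : V, (sideSet G p q).ncard ≤ Fintype.card V := by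
        intro p q
        have := Set.ncard_le_ncard (Set.subset_univ (sideSet G p q)) Set.finite_univ
        rwa [Set.ncard_univ, Nat.card_eq_fintype_card] at this
      obtain ⟨xA, hA0, hAe⟩ := build hG hdeg d hsymm hd0 htri (Fintype.card V) v₀ s₀ hrs
        (hcardle _ _) u₀ hnorm
      obtain ⟨xB, hB0, hBe⟩ := build hG hdeg d hsymm hd0 htri (Fintype.card V) s₀ v₀ hrs.symm
        (hcardle _ _) (-u₀) (by rw [norm_neg, hnorm, hsymm])
      set x : V → EuclideanSpace ℝ (Fin 3) :=
        fun i => if i ∈ sideSet G v₀ s₀ then xA i else xB i with hxdef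
      have hxAmem : ∀ z, z ∈ sideSet G v₀ s₀ → x z = xA z := fun z hz => if_pos hz
      have hxBmem : ∀ z, z ∈ sideSet G s₀ v₀ → x z = xB z := fun z hz =>
        if_neg fun h => side_disjoint hac hrs h hz
      have hdisj0 : Disjoint ({y : V | G.degree y = 1} ∩ sideSet G v₀ s₀)
          ({y : V | G.degree y = 1} ∩ sideSet G s₀ v₀) :=
        Set.disjoint_left.mpr fun z h1 h2 => (side_disjoint hac hrs h1.2 h2.2).elim
      have hx0 : (∑ᶠ i ∈ {y : V | G.degree y = 1}, x i) = 0 := by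
        rw [L_split_edge hpre hrs, finsum_mem_union hdisj0 (Set.toFinite _) (Set.toFinite _),
          finsum_mem_congr rfl (fun z hz => hxAmem z hz.2),
          finsum_mem_congr rfl (fun z hz => hxBmem z hz.2), hA0, hB0]
        abel
      refine ⟨x, hx0, ?_⟩
      have hdone : ∀ v w : V, G.Adj v w →
          (sideSet G v w ⊆ sideSet G v₀ s₀ ∨ sideSet G v w ⊆ sideSet G s₀ v₀) →
          d v w = ‖∑ᶠ i ∈ ({y : V | G.degree y = 1} ∩ sideSet G v w), x i‖ := by
        rintro v w hvw (hsub | hsub)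
        · rw [finsum_mem_congr rfl (fun z hz => hxAmem z (hsub hz.2))]
          exact hAe v w hvw hsub
        · rw [finsum_mem_congr rfl (fun z hz => hxBmem z (hsub hz.2))]
          exact hBe v w hvw hsub
      intro v w hvw
      have hor : (sideSet G v w ⊆ sideSet G v₀ s₀ ∨ sideSet G v w ⊆ sideSet G s₀ v₀) ∨
          (sideSet G w v ⊆ sideSet G v₀ s₀ ∨ sideSet G w v ⊆ sideSet G s₀ v₀) := by
        rcases side_cover hpre hrs v with hv | hv
        · rcases side_cover hpre hrs w with hw | hw
          · rcases side_cover hpre hvw s₀ with hs | hs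
            · exact Or.inr (Or.inl (side_mono (fun h => side_disjoint hac hvw hs h) hw))
            · exact Or.inl (Or.inl (side_mono (fun h => side_disjoint hac hvw h hs) hv))
          · obtain ⟨hvr, hws⟩ := side_crossing hac hvw hrs hv hw
            refine Or.inl (Or.inl ?_)
            rw [hvr, hws]
        · rcases side_cover hpre hrs w with hw | hw
          · obtain ⟨hwr, hvs⟩ := side_crossing hac hvw.symm hrs hw hv
            refine Or.inr (Or.inl ?_)
            rw [hwr, hvs]
          · rcases side_cover hpre hvw v₀ with hs | hs
            · exact Or.inr (Or.inr (side_mono (fun h => side_disjoint hac hvw hs h) hw))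
            · exact Or.inl (Or.inr (side_mono (fun h => side_disjoint hac hvw h hs) hv))
      rcases hor with hsub | hsub
      · exact hdone v w hvw hsub
      · have hflip := sum_flip hac hpre hvw x hx0
        rw [hsymm v w, hflip, norm_neg]
        exact hdone w v hvw.symm hsub
    · refine ⟨fun _ => 0, by simp, fun v w h => absurd ⟨v⟩ hne⟩
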